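/- Let A be a profinite algebra and θ a closed congruence on A such that the quotient A/θ is 0-dimensional. Then A/θ is a profinite algebra. -/

import Mathlib

universe u v w

/-- The translation monoid `M(A)`: self-maps of `A` given by terms linear in a
distinguished variable, with all other variables evaluated in `A`. -/
inductive IsTranslation {Ω : ℕ → Type u} {A : Type v}
    (ops : ∀ n, Ω n → (Fin n → A) → A) : (A → A) → Prop
  | id_map : IsTranslation ops id
  | comp {n : ℕ} (w : Ω n) (i : Fin n) (v : Fin n → A) {f : A → A}
      (hf : IsTranslation ops f) :
      IsTranslation ops (fun a => ops n w (Function.update v i (f a)))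

/-- A congruence on an `Ω`-algebra. -/
def IsCongruence {Ω : ℕ → Type u} {A : Type v}
    (ops : ∀ n, Ω n → (Fin n → A) → A) (θ : A → A → Prop) : Prop :=
  Equivalence θ ∧
    ∀ ⦃n : ℕ⦄ (w : Ω n) (u v : Fin n → A),
      (∀ i, θ (u i) (v i)) → θ (ops n w u) (ops n w v)

/-- An equivalence relation saturates `L` when `L` is a union of its classes. -/
def Saturates {A : Type v} (θ : A → A → Prop) (L : Set A) : Prop :=
  ∀ a a', θ a a' → (a ∈ L ↔ a' ∈ L)

/-- The syntactic congruence of `L ⊆ A`. -/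
def synCong {Ω : ℕ → Type u} {A : Type v}
    (ops : ∀ n, Ω n → (Fin n → A) → A) (L : Set A) : A → A → Prop :=
  fun a a' => ∀ f : A → A, IsTranslation ops f → (f a ∈ L ↔ f a' ∈ L)

theorem synCong_equivalence {Ω : ℕ → Type u} {A : Type v}
    (ops : ∀ n, Ω n → (Fin n → A) → A) (L : Set A) :
    Equivalence (synCong ops L) :=
  ⟨fun _ _ _ => Iff.rfl, fun h f hf => (h f hf).symm,
    fun h1 h2 f hf => (h1 f hf).trans (h2 f hf)⟩

/-- Residual finiteness: distinct points are separated by continuous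
homomorphisms onto finite discrete algebras. -/
def ResiduallyFinite {Ω : ℕ → Type u} {A : Type v} [TopologicalSpace A]
    (ops : ∀ n, Ω n → (Fin n → A) → A) : Prop :=
  ∀ a a' : A, a ≠ a' →
    ∃ (B : Type v) (_ : Fintype B) (opsB : ∀ n, Ω n → (Fin n → B) → B) (φ : A → B),
      @Continuous A B _ ⊥ φ ∧
      (∀ (n : ℕ) (w : Ω n) (v : Fin n → A), φ (ops n w v) = opsB n w (fun i => φ (v i))) ∧
      φ a ≠ φ a'

/-- The quotient algebra structure on `A/s`. -/
noncomputable def qops {Ω : ℕ → Type u} {A : Type v}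
    (ops : ∀ n, Ω n → (Fin n → A) → A) (s : Setoid A) :
    ∀ n, Ω n → (Fin n → Quotient s) → Quotient s :=
  fun n w v => Quotient.mk s (ops n w (fun i => (v i).out))

section Aux

variable {Ω : ℕ → Type u} {A : Type v}

/-- Translations are closed under composition. -/
theorem IsTranslation.compose {ops : ∀ n, Ω n → (Fin n → A) → A} {f g : A → A}
    (hf : IsTranslation ops f) (hg : IsTranslation ops g) :
    IsTranslation ops (f ∘ g) := by
  induction hf with
  | id_map => exact hg
  | comp w i v hf ih => exact IsTranslation.comp w i v ih

/-- Translations preserve congruences. -/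
theorem translation_preserves {ops : ∀ n, Ω n → (Fin n → A) → A} {ρ : A → A → Prop}
    (hρ : IsCongruence ops ρ) {g : A → A} (hg : IsTranslation ops g)
    {a b : A} (h : ρ a b) : ρ (g a) (g b) := by
  induction hg with
  | id_map => exact h
  | comp w i v hf ih =>
    refine hρ.2 w _ _ fun j => ?_
    rcases eq_or_ne j i with rfl | hj
    · simpa using ih
    · simp only [Function.update_of_ne hj]
      exact hρ.1.refl _

/-- The syntactic congruence is a congruence. -/
theorem synCong_isCongruence (ops : ∀ n, Ω n → (Fin n → A) → A) (L : Set A) :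
    IsCongruence ops (synCong ops L) := by
  refine ⟨synCong_equivalence ops L, ?_⟩
  intro n w u v huv
  have step : ∀ (m : Fin n → A) (i : Fin n),
      synCong ops L (ops n w (Function.update m i (u i)))
        (ops n w (Function.update m i (v i))) := by
    intro m i f hf
    exact huv i _ (hf.compose (IsTranslation.comp w i m IsTranslation.id_map))
  have key : ∀ k : ℕ, k ≤ n →
      synCong ops L (ops n w u) (ops n w (fun i => if i.1 < k then v i else u i)) := by
    intro k
    induction k with
    | zero =>
      intro _
      have hu : (fun i : Fin n => if i.1 < 0 then v i else u i) = u := by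
        funext i; simp
      rw [hu]
      exact (synCong_equivalence ops L).refl _
    | succ k ih =>
      intro hk
      set i : Fin n := ⟨k, hk⟩ with hidef
      set m : Fin n → A := fun j => if j.1 < k then v j else u j with hm
      have e1 : m = Function.update m i (u i) := by
        funext j
        rcases eq_or_ne j i with rfl | hj
        · simp [hm, hidef]
        · simp [Function.update_of_ne hj]
      have e2 : (fun j : Fin n => if j.1 < k + 1 then v j else u j)
          = Function.update m i (v i) := by
        funext j
        rcases eq_or_ne j i with rfl | hj
        · simp [hidef]
        · have hjk : j.1 ≠ k := fun h => hj (Fin.ext h)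
          have : (j.1 < k + 1) = (j.1 < k) := by
            simp only [eq_iff_iff]; omega
          simp only [Function.update_of_ne hj, hm, this]
      refine (synCong_equivalence ops L).trans (ih (Nat.le_of_succ_le hk)) ?_
      rw [e2]
      conv_lhs => rw [e1]
      exact step m i
  have hv : (fun i : Fin n => if i.1 < n then v i else u i) = v := by
    funext i; simp [i.2]
  have := key n le_rfl
  rwa [hv] at this

/-- `Quotient.mk` is a homomorphism onto the quotient algebra. -/
theorem mk_qops {ops : ∀ n, Ω n → (Fin n → A) → A} {s : Setoid A}
    (hcong : IsCongruence ops (fun a b => s.r a b))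
    (n : ℕ) (w : Ω n) (u : Fin n → A) :
    qops ops s n w (fun i => Quotient.mk s (u i)) = Quotient.mk s (ops n w u) :=
  Quotient.sound (hcong.2 w _ _ fun i => Quotient.mk_out (u i))

/-- Translations of the quotient algebra lift to translations of `A`. -/
theorem lift_translation {ops : ∀ n, Ω n → (Fin n → A) → A} {s : Setoid A}
    (hcong : IsCongruence ops (fun a b => s.r a b))
    {f : Quotient s → Quotient s} (hf : IsTranslation (qops ops s) f) :
    ∃ g : A → A, IsTranslation ops g ∧
      ∀ a, f (Quotient.mk s a) = Quotient.mk s (g a) := by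
  induction hf with
  | id_map => exact ⟨id, IsTranslation.id_map, fun _ => rfl⟩
  | comp w i v hf ih =>
    obtain ⟨g, hg, hfg⟩ := ih
    refine ⟨fun a => ops _ w (Function.update (fun j => (v j).out) i (g a)),
      IsTranslation.comp w i _ hg, fun a => ?_⟩
    show qops ops s _ w (Function.update v i (_)) = _
    rw [hfg]
    show Quotient.mk s (ops _ w
      (fun j => (Function.update v i (Quotient.mk s (g a)) j).out)) = _
    refine Quotient.sound (hcong.2 w _ _ fun j => ?_)
    rcases eq_or_ne j i with rfl | hj
    · simp only [Function.update_self]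
      exact Quotient.mk_out _
    · simp only [Function.update_of_ne hj]
      exact hcong.1.refl _

end Aux

/-- Let `A` be a profinite algebra and `θ` a closed congruence on `A` such that
`A/θ` is 0-dimensional. Then `A/θ` is a profinite (topological) algebra. -/
theorem stmt8 {Ω : ℕ → Type u} {A : Type v} [TopologicalSpace A]
    [CompactSpace A] [T2Space A]
    (ops : ∀ n, Ω n → (Fin n → A) → A)
    (hc : ∀ (n : ℕ) (w : Ω n), Continuous (ops n w))
    (hRF : ResiduallyFinite ops)
    (s : Setoid A)
    (hcong : IsCongruence ops (fun a b => s.r a b))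
    (hclosed : IsClosed {p : A × A | s.r p.1 p.2})
    (hzero : TopologicalSpace.IsTopologicalBasis
      {U : Set (Quotient s) | IsClopen U}) :
    CompactSpace (Quotient s) ∧ T2Space (Quotient s) ∧
      (∀ (n : ℕ) (w : Ω n), Continuous (qops ops s n w)) ∧
      ResiduallyFinite (qops ops s) := by
  set π : A → Quotient s := Quotient.mk s with hπ
  have hπc : Continuous π := continuous_quotient_mk'
  have hπsurj : Function.Surjective π := fun z => z.exists_rep
  have hqm : Topology.IsQuotientMap π := isQuotientMap_quot_mk
  -- saturations of closed sets are closed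
  have hsatclosed : ∀ C : Set A, IsClosed C → IsClosed (π ⁻¹' (π '' C)) := by
    intro C hC
    have heq : π ⁻¹' (π '' C)
        = Prod.snd '' ({p : A × A | s.r p.1 p.2} ∩ C ×ˢ Set.univ) := by
      ext a
      constructor
      · rintro ⟨c, hc', hce⟩
        exact ⟨(c, a), ⟨Quotient.exact hce, hc', trivial⟩, rfl⟩
      · rintro ⟨⟨c, a'⟩, ⟨hr, hc', -⟩, rfl⟩
        exact ⟨c, hc', Quotient.sound hr⟩
    rw [heq]
    exact (((hclosed.inter (hC.prod isClosed_univ)).isCompact).image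
      continuous_snd).isClosed
  -- the quotient map is closed
  have hclosedmap : IsClosedMap π := by
    intro C hC
    exact ((Topology.isQuotientMap_iff_isClosed.1 hqm).2 _).2 (hsatclosed C hC)
  -- classes are closed
  have hclassclosed : ∀ a : A, IsClosed {c | s.r c a} := by
    intro a
    have : {c | s.r c a} = (fun c => (c, a)) ⁻¹' {p : A × A | s.r p.1 p.2} := rfl
    rw [this]
    exact hclosed.preimage (continuous_id.prodMk continuous_const)
  -- Hausdorffness
  have hT2 : T2Space (Quotient s) := by
    constructor
    intro x y hxy
    obtain ⟨a, rfl⟩ := hπsurj x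
    obtain ⟨b, rfl⟩ := hπsurj y
    have hdisj : Disjoint {c | s.r c a} {c | s.r c b} := by
      rw [Set.disjoint_left]
      intro c hca hcb
      exact hxy (Quotient.sound (hcong.1.trans (hcong.1.symm hca) hcb))
    obtain ⟨U, V, hU, hV, hCaU, hCbV, hUV⟩ :=
      normal_separation (hclassclosed a) (hclassclosed b) hdisj
    refine ⟨(π '' Uᶜ)ᶜ, (π '' Vᶜ)ᶜ,
      (hclosedmap _ hU.isClosed_compl).isOpen_compl,
      (hclosedmap _ hV.isClosed_compl).isOpen_compl, ?_, ?_, ?_⟩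
    · rintro ⟨c, hc, hce⟩
      exact hc (hCaU (Quotient.exact hce))
    · rintro ⟨c, hc, hce⟩
      exact hc (hCbV (Quotient.exact hce))
    · rw [Set.disjoint_left]
      rintro z hz1 hz2
      obtain ⟨c, rfl⟩ := hπsurj z
      have hcU : c ∈ U := by
        by_contra h
        exact hz1 ⟨c, h, rfl⟩
      have hcV : c ∈ V := by
        by_contra h
        exact hz2 ⟨c, h, rfl⟩
      exact Set.disjoint_left.1 hUV hcU hcV
  haveI := hT2
  -- continuity of the quotient operations
  have hqc : ∀ (n : ℕ) (w : Ω n), Continuous (qops ops s n w) := by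
    intro n w
    have hπn : Topology.IsQuotientMap (fun u : Fin n → A => fun i => π (u i)) :=
      Topology.IsQuotientMap.of_surjective_continuous
        (fun v => ⟨fun i => (v i).out, funext fun i => Quotient.out_eq _⟩)
        (continuous_pi fun i => hπc.comp (continuous_apply i))
    rw [hπn.continuous_iff]
    have : (qops ops s n w) ∘ (fun u : Fin n → A => fun i => π (u i))
        = π ∘ ops n w := by
      funext u
      exact mk_qops hcong n w u
    rw [this]
    exact hπc.comp (hc n w)
  -- continuity of translations of the quotient algebra
  have htc : ∀ f : Quotient s → Quotient s,
      IsTranslation (qops ops s) f → Continuous f := by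
    intro f hf
    induction hf with
    | id_map => exact continuous_id
    | comp w i v hf ih =>
      refine (hqc _ w).comp (continuous_pi fun j => ?_)
      rcases eq_or_ne j i with rfl | hj
      · simpa using ih
      · simp only [Function.update_of_ne hj]
        exact continuous_const
  refine ⟨inferInstance, hT2, hqc, ?_⟩
  -- residual finiteness of the quotient
  intro x y hxy
  obtain ⟨a, rfl⟩ := hπsurj x
  obtain ⟨b, rfl⟩ := hπsurj y
  -- a separating clopen set
  obtain ⟨U, hUc, hxU, hyU⟩ : ∃ U, IsClopen U ∧ π a ∈ U ∧ π b ∉ U := by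
    obtain ⟨W₁, W₂, hW₁, hW₂, hx1, hy2, hW⟩ := t2_separation hxy
    obtain ⟨U, hU, hxU, hUW⟩ := hzero.exists_subset_of_mem_open hx1 hW₁
    exact ⟨U, hU, hxU, fun h => Set.disjoint_left.1 hW (hUW h) hy2⟩
  set V : Set A := π ⁻¹' U with hVdef
  have hVc : IsClopen V := ⟨hUc.1.preimage hπc, hUc.2.preimage hπc⟩
  -- finitely many separating homomorphisms for `V ×ˢ Vᶜ`
  choose Bf fB opsB φ hφcont hφhom hφne using
    fun q : {q : A × A // q.1 ≠ q.2} => hRF q.1.1 q.1.2 q.2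
  set W : {q : A × A // q.1 ≠ q.2} → Set (A × A) :=
    fun q => {p | φ q p.1 ≠ φ q p.2} with hWdef
  have hWopen : ∀ q, IsOpen (W q) := by
    intro q
    letI : TopologicalSpace (Bf q) := ⊥
    haveI : DiscreteTopology (Bf q) := ⟨rfl⟩
    have : W q = (fun p : A × A => (φ q p.1, φ q p.2)) ⁻¹'
        {x : Bf q × Bf q | x.1 ≠ x.2} := rfl
    rw [this]
    exact (isOpen_discrete _).preimage
      (((hφcont q).comp continuous_fst).prodMk ((hφcont q).comp continuous_snd))
  have hcover : V ×ˢ Vᶜ ⊆ ⋃ q, W q := by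
    rintro ⟨p1, p2⟩ ⟨hp1, hp2⟩
    have hne : p1 ≠ p2 := by rintro rfl; exact hp2 hp1
    exact Set.mem_iUnion.2 ⟨⟨(p1, p2), hne⟩, hφne _⟩
  obtain ⟨t, ht⟩ := ((hVc.1.prod hVc.2.isClosed_compl).isCompact).elim_finite_subcover
    W hWopen hcover
  set ρ : A → A → Prop := fun a b => ∀ q ∈ t, φ q a = φ q b with hρdef
  have hρequiv : Equivalence ρ :=
    ⟨fun _ _ _ => rfl, fun h q hq => (h q hq).symm, fun h1 h2 q hq => (h1 q hq).trans (h2 q hq)⟩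
  have hρcong : IsCongruence ops ρ := by
    refine ⟨hρequiv, ?_⟩
    intro n w u v' huv q hq
    rw [hφhom q, hφhom q]
    congr 1
    funext i
    exact huv i q hq
  have hρsat1 : ∀ a b, ρ a b → a ∈ V → b ∈ V := by
    intro a b hab ha
    by_contra hb
    have := ht (Set.mk_mem_prod ha hb)
    obtain ⟨q, hq, hmem⟩ := Set.mem_iUnion₂.1 this
    exact hmem (hab q hq)
  have hρsat : ∀ a b, ρ a b → (a ∈ V ↔ b ∈ V) :=
    fun a b hab => ⟨hρsat1 a b hab, hρsat1 b a (hρequiv.symm hab)⟩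
  -- the syntactic congruence of U on the quotient
  set σ : Quotient s → Quotient s → Prop := synCong (qops ops s) U with hσdef
  have hσcong : IsCongruence (qops ops s) σ := synCong_isCongruence _ _
  set σS : Setoid (Quotient s) := ⟨σ, synCong_equivalence _ _⟩ with hσS
  set φ' : Quotient s → Quotient σS := Quotient.mk σS with hφ'
  have hρτ : ∀ a b, ρ a b → σ (π a) (π b) := by
    intro a b hab f hf
    obtain ⟨g, hg, hfg⟩ := lift_translation hcong hf
    rw [hfg a, hfg b]
    exact hρsat _ _ (translation_preserves hρcong hg hab)
  -- finiteness of the syntactic quotient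
  set ρS : Setoid A := ⟨ρ, hρequiv⟩ with hρS
  have hfinρ : Finite (Quotient ρS) := by
    have hinj : Function.Injective
        (Quotient.lift (fun a (q : t) => φ q.1 a)
          (fun a b h => funext fun q => h q.1 q.2) : Quotient ρS → ∀ q : t, Bf q.1) := by
      intro z1 z2 h
      obtain ⟨a, rfl⟩ := z1.exists_rep
      obtain ⟨b, rfl⟩ := z2.exists_rep
      refine Quotient.sound fun q hq => ?_
      exact congrFun h ⟨q, hq⟩
    exact Finite.of_injective _ hinj
  have hfinB : Finite (Quotient σS) := by
    have hsurj : Function.Surjective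
        (Quotient.lift (fun a => φ' (π a))
          (fun a b h => Quotient.sound (hρτ a b h)) : Quotient ρS → Quotient σS) := by
      intro z
      obtain ⟨x, rfl⟩ := z.exists_rep
      obtain ⟨a, rfl⟩ := hπsurj x
      exact ⟨Quotient.mk ρS a, rfl⟩
    exact Finite.of_surjective _ hsurj
  -- fibers of φ' are closed
  have hfib : ∀ w : Quotient σS, IsClosed (φ' ⁻¹' {w}) := by
    intro w
    obtain ⟨z, rfl⟩ := w.exists_rep
    have heq : φ' ⁻¹' {Quotient.mk σS z}
        = ⋂ (f : Quotient s → Quotient s) (_ : IsTranslation (qops ops s) f),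
            {x | f x ∈ U ↔ f z ∈ U} := by
      ext x
      simp only [Set.mem_preimage, Set.mem_singleton_iff, Set.mem_iInter, Set.mem_setOf_eq]
      constructor
      · intro h f hf
        exact Quotient.exact h f hf
      · intro h
        exact Quotient.sound (fun f hf => h f hf)
    rw [heq]
    refine isClosed_iInter fun f => isClosed_iInter fun hf => ?_
    by_cases hz : f z ∈ U
    · have : {x | f x ∈ U ↔ f z ∈ U} = f ⁻¹' U := by ext x; simp [hz]
      rw [this]
      exact hUc.1.preimage (htc f hf)
    · have : {x | f x ∈ U ↔ f z ∈ U} = f ⁻¹' Uᶜ := by ext x; simp [hz]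
      rw [this]
      exact hUc.2.isClosed_compl.preimage (htc f hf)
  -- φ' is continuous for the discrete topology
  have hopen : ∀ S : Set (Quotient σS), IsOpen (φ' ⁻¹' S) := by
    intro S
    have heq : φ' ⁻¹' S = (φ' ⁻¹' Sᶜ)ᶜ := by
      rw [Set.preimage_compl, compl_compl]
    have hclS : IsClosed (φ' ⁻¹' Sᶜ) := by
      have : φ' ⁻¹' Sᶜ = ⋃ w ∈ Sᶜ, φ' ⁻¹' {w} := by
        ext x; simp
      rw [this]
      exact (Set.toFinite Sᶜ).isClosed_biUnion fun w _ => hfib w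
    rw [heq]
    exact hclS.isOpen_compl
  have hcont : @Continuous (Quotient s) (Quotient σS) _ ⊥ φ' :=
    @Continuous.mk _ _ _ ⊥ φ' (fun S _ => hopen S)
  -- conclusion
  haveI : Fintype (Quotient σS) := Fintype.ofFinite _
  refine ⟨Quotient σS, inferInstance, qops (qops ops s) σS, φ', hcont, ?_, ?_⟩
  · intro n w v'
    refine (Quotient.sound (hσcong.2 w _ _ fun i => ?_)).symm
    exact Quotient.mk_out (v' i)
  · intro h
    have := Quotient.exact h id IsTranslation.id_map
    exact hyU (this.1 hxU)
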